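/- Let X be a finite simplicial complex whose geometric realization |X| ⊂ ℝ[V(X)] (with the standard metric) is connected, of dimension at most n. Then for every k with 2 ≤ k ≤ n, the (k−1)-skeleton satisfies diam(|X_{k−1}|) ≤ C_k · diam(|X_k|), where C_k is a constant depending only on k. -/

import Mathlib

open scoped ENNReal NNReal

structure SComplex (V : Type*) where
  faces : Set (Finset V)
  singleton_mem : ∀ v : V, {v} ∈ faces
  down_closed : ∀ σ ∈ faces, ∀ τ : Finset V, τ ⊆ σ → τ.Nonempty → τ ∈ faces

/-- The geometric simplex `|σ| ⊆ ℝ[V]` (standard metric), for `σ` a finite vertex set. -/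
def geomFace {V : Type*} [Fintype V] (σ : Finset V) : Set (EuclideanSpace ℝ V) :=
  {x | (∀ v, 0 ≤ x v) ∧ (∀ v, v ∉ σ → x v = 0) ∧ ∑ v, x v = 1}

/-- The geometric realization `|X| ⊆ ℝ[V]`. -/
def realization {V : Type*} [Fintype V] (X : SComplex V) : Set (EuclideanSpace ℝ V) :=
  ⋃ σ ∈ X.faces, geomFace σ

/-- The `k`-skeleton `X_k` of `X`. -/
def SComplex.skeleton {V : Type*} (X : SComplex V) (k : ℕ) : SComplex V where
  faces := {σ | σ ∈ X.faces ∧ σ.card ≤ k + 1}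
  singleton_mem := fun v => ⟨X.singleton_mem v, by simp⟩
  down_closed := fun σ hσ τ hτ hne =>
    ⟨X.down_closed σ hσ.1 τ hτ hne, le_trans (Finset.card_le_card hτ) hσ.2⟩

/-- Intrinsic (path-metric) distance inside a subset `s`: the infimum of lengths of
continuous paths in `s` joining `x` to `y`. -/
noncomputable def pathDist {E : Type*} [PseudoEMetricSpace E] (s : Set E) (x y : E) : ℝ≥0∞ :=
  ⨅ γ : {γ : ℝ → E // ContinuousOn γ (Set.Icc 0 1) ∧ γ 0 = x ∧ γ 1 = y ∧
      Set.MapsTo γ (Set.Icc 0 1) s},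
    eVariationOn γ.1 (Set.Icc 0 1)

/-- Intrinsic diameter of a subset. -/
noncomputable def pathDiam {E : Type*} [PseudoEMetricSpace E] (s : Set E) : ℝ≥0∞ :=
  ⨆ x ∈ s, ⨆ y ∈ s, pathDist s x y

open Set

/-! ### generic pathDist lemmas -/

lemma pathDist_le {E : Type*} [PseudoEMetricSpace E] {s : Set E} {x y : E} (γ : ℝ → E)
    (hc : ContinuousOn γ (Set.Icc 0 1)) (h0 : γ 0 = x) (h1 : γ 1 = y)
    (hm : Set.MapsTo γ (Set.Icc 0 1) s) :
    pathDist s x y ≤ eVariationOn γ (Set.Icc 0 1) :=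
  iInf_le _ (⟨γ, hc, h0, h1, hm⟩ :
    {γ : ℝ → E // ContinuousOn γ (Set.Icc 0 1) ∧ γ 0 = x ∧ γ 1 = y ∧
      Set.MapsTo γ (Set.Icc 0 1) s})

lemma pathDist_self {E : Type*} [PseudoEMetricSpace E] {s : Set E} {x : E} (hx : x ∈ s) :
    pathDist s x x = 0 := by
  refine le_antisymm ?_ zero_le
  refine le_trans (pathDist_le (fun _ => x) continuousOn_const rfl rfl (fun t _ => hx))
    (le_of_eq (eVariationOn.constant_on ?_))
  intro a ⟨_, _, ha⟩ b ⟨_, _, hb⟩; simp_all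

lemma continuousOn_union_closed {α E : Type*} [TopologicalSpace α] [TopologicalSpace E]
    {f : α → E} {s t : Set α} (hs : IsClosed s) (ht : IsClosed t)
    (h1 : ContinuousOn f s) (h2 : ContinuousOn f t) : ContinuousOn f (s ∪ t) := by
  intro x hx
  apply ContinuousWithinAt.union
  · by_cases h : x ∈ s
    · exact h1 x h
    · exact continuousWithinAt_of_notMem_closure (by rwa [hs.closure_eq])
  · by_cases h : x ∈ t
    · exact h2 x h
    · exact continuousWithinAt_of_notMem_closure (by rwa [ht.closure_eq])

lemma pathDist_triangle {E : Type*} [PseudoEMetricSpace E] (s : Set E) (x y z : E) :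
    pathDist s x z ≤ pathDist s x y + pathDist s y z := by
  conv_rhs => rw [pathDist, pathDist]
  rw [ENNReal.iInf_add]
  refine le_iInf fun γ₁ => ?_
  rw [ENNReal.add_iInf]
  refine le_iInf fun γ₂ => ?_
  obtain ⟨g₁, hc₁, h0₁, h1₁, hm₁⟩ := γ₁
  obtain ⟨g₂, hc₂, h0₂, h1₂, hm₂⟩ := γ₂
  set γ : ℝ → E := fun t => if t ≤ 2⁻¹ then g₁ (2 * t) else g₂ (2 * t - 1) with hγ
  have key1 : EqOn γ (fun t => g₁ (2 * t)) (Icc (0:ℝ) 2⁻¹) := by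
    intro t ht
    simp only [γ, if_pos ht.2]
  have key2 : EqOn γ (fun t => g₂ (2 * t - 1)) (Icc (2⁻¹:ℝ) 1) := by
    intro t ht
    rcases lt_or_eq_of_le ht.1 with h | h
    · simp only [γ, if_neg (not_le.mpr h)]
    · simp only [γ, ← h]
      norm_num [h1₁, h0₂]
  have hmono1 : MonotoneOn (fun t : ℝ => 2 * t) (Icc (0:ℝ) 2⁻¹) :=
    fun a _ b _ hab => by dsimp only; linarith
  have hmono2 : MonotoneOn (fun t : ℝ => 2 * t - 1) (Icc (2⁻¹:ℝ) 1) :=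
    fun a _ b _ hab => by dsimp only; linarith
  have hmap1 : MapsTo (fun t : ℝ => 2 * t) (Icc (0:ℝ) 2⁻¹) (Icc (0:ℝ) 1) := by
    intro t ht
    obtain ⟨ht1, ht2⟩ := ht
    exact ⟨by dsimp only; linarith, by dsimp only; linarith⟩
  have hmap2 : MapsTo (fun t : ℝ => 2 * t - 1) (Icc (2⁻¹:ℝ) 1) (Icc (0:ℝ) 1) := by
    intro t ht
    obtain ⟨ht1, ht2⟩ := ht
    exact ⟨by dsimp only; linarith, by dsimp only; linarith⟩
  have h1 : ContinuousOn γ (Icc (0:ℝ) 2⁻¹) :=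
    ContinuousOn.congr (hc₁.comp (by fun_prop) hmap1) key1
  have h2 : ContinuousOn γ (Icc (2⁻¹:ℝ) 1) :=
    ContinuousOn.congr (hc₂.comp (by fun_prop) hmap2) key2
  have hcont : ContinuousOn γ (Icc 0 1) := by
    have := continuousOn_union_closed isClosed_Icc isClosed_Icc h1 h2
    rwa [Icc_union_Icc_eq_Icc (by norm_num) (by norm_num)] at this
  have hmaps : MapsTo γ (Icc 0 1) s := by
    intro t ht
    obtain ⟨ht1, ht2⟩ := ht
    by_cases h : t ≤ 2⁻¹
    · simp only [γ, if_pos h]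
      exact hm₁ ⟨by linarith, by linarith⟩
    · simp only [γ, if_neg h]
      push_neg at h
      exact hm₂ ⟨by linarith, by linarith⟩
  have hγ0 : γ 0 = x := by norm_num [γ, h0₁]
  have hγ1 : γ 1 = z := by norm_num [γ, h1₂]
  refine le_trans (pathDist_le γ hcont hγ0 hγ1 hmaps) ?_
  have hsplit := eVariationOn.Icc_add_Icc γ (s := Icc (0:ℝ) 1) (a := 0) (b := 2⁻¹) (c := 1)
    (by norm_num) (by norm_num) (by norm_num)
  have e1 : Icc (0:ℝ) 1 ∩ Icc 0 2⁻¹ = Icc (0:ℝ) 2⁻¹ := by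
    rw [Set.Icc_inter_Icc]; norm_num
  have e2 : Icc (0:ℝ) 1 ∩ Icc 2⁻¹ 1 = Icc (2⁻¹:ℝ) 1 := by
    rw [Set.Icc_inter_Icc]; norm_num
  have e3 : Icc (0:ℝ) 1 ∩ Icc 0 1 = Icc (0:ℝ) 1 := by simp
  rw [e1, e2, e3] at hsplit
  rw [← hsplit]
  gcongr
  · rw [eVariationOn.eq_of_eqOn key1]
    exact eVariationOn.comp_le_of_monotoneOn g₁ (fun t => 2 * t) hmono1 hmap1
  · rw [eVariationOn.eq_of_eqOn key2]
    exact eVariationOn.comp_le_of_monotoneOn g₂ (fun t => 2 * t - 1) hmono2 hmap2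

lemma eVariationOn_id_Icc' : eVariationOn (id : ℝ → ℝ) (Icc 0 1) ≤ 1 := by
  have := MonotoneOn.eVariationOn_le (f := (id : ℝ → ℝ)) (s := (univ : Set ℝ))
    (monotoneOn_id) (a := 0) (b := 1) (mem_univ _) (mem_univ _)
  simpa using this

lemma pathDist_le_edist_of_segment {V : Type*} [Fintype V] {s : Set (EuclideanSpace ℝ V)}
    {x y : EuclideanSpace ℝ V} (h : ∀ t ∈ Icc (0:ℝ) 1, x + t • (y - x) ∈ s) :
    pathDist s x y ≤ edist x y := by
  set γ : ℝ → EuclideanSpace ℝ V := fun t => x + t • (y - x) with hγ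
  have hlip : LipschitzWith ‖y - x‖₊ γ := by
    refine LipschitzWith.of_dist_le_mul fun a b => ?_
    have hab : γ a - γ b = (a - b) • (y - x) := by
      simp only [γ]; module
    have hd : dist (γ a) (γ b) = ‖y - x‖ * dist a b := by
      rw [dist_eq_norm, hab, norm_smul, Real.dist_eq, Real.norm_eq_abs]; ring
    rw [hd, coe_nnnorm]
  have hcont : ContinuousOn γ (Icc 0 1) := hlip.continuous.continuousOn
  have h0 : γ 0 = x := by simp [γ]
  have h1 : γ 1 = y := by simp [γ]
  refine le_trans (pathDist_le γ hcont h0 h1 h) ?_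
  have : eVariationOn (γ ∘ id) (Icc 0 1) ≤ ‖y - x‖₊ * eVariationOn (id : ℝ → ℝ) (Icc 0 1) :=
    (hlip.lipschitzOnWith (s := univ)).comp_eVariationOn_le (mapsTo_univ _ _)
  rw [Function.comp_id] at this
  refine le_trans this ?_
  rw [edist_comm, edist_nndist, nndist_eq_nnnorm]
  calc (‖y - x‖₊ : ℝ≥0∞) * eVariationOn (id : ℝ → ℝ) (Icc 0 1)
      ≤ ‖y - x‖₊ * 1 := by gcongr; exact eVariationOn_id_Icc'
    _ = ‖y - x‖₊ := by rw [mul_one]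

/-! ### geometry of the realization -/

section Geometry
variable {V : Type} [Fintype V] [DecidableEq V]

lemma geomFace_subset_realization {X : SComplex V} {σ : Finset V} (h : σ ∈ X.faces) :
    geomFace σ ⊆ realization X := fun x hx => Set.mem_biUnion h hx

lemma mem_realization {X : SComplex V} {x : EuclideanSpace ℝ V} (hx : x ∈ realization X) :
    ∃ σ ∈ X.faces, x ∈ geomFace σ := by
  simpa [realization] using hx

lemma single_mem_geomFace {v : V} {σ : Finset V} (hv : v ∈ σ) :
    EuclideanSpace.single v (1:ℝ) ∈ geomFace σ := by
  refine ⟨fun w => ?_, fun w hw => ?_, ?_⟩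
  · rw [EuclideanSpace.single_apply]; split <;> norm_num
  · rw [EuclideanSpace.single_apply, if_neg]; rintro rfl; exact hw hv
  · simp [EuclideanSpace.single_apply]

lemma single_mem_realization (X : SComplex V) (v : V) :
    EuclideanSpace.single v (1:ℝ) ∈ realization X :=
  geomFace_subset_realization (X.singleton_mem v) (single_mem_geomFace (Finset.mem_singleton_self v))

lemma exists_pos_coord {x : EuclideanSpace ℝ V} {σ : Finset V} (hx : x ∈ geomFace σ) :
    ∃ v ∈ σ, 0 < x v := by
  by_contra h
  push_neg at h
  have hz : ∀ v, x v = 0 := by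
    intro v
    by_cases hv : v ∈ σ
    · exact le_antisymm (h v hv) (hx.1 v)
    · exact hx.2.1 v hv
  have : (1:ℝ) = 0 := by rw [← hx.2.2]; simp [hz]
  norm_num at this

lemma coord_le_one {x : EuclideanSpace ℝ V} {σ : Finset V} (hx : x ∈ geomFace σ) (v : V) :
    x v ≤ 1 := by
  rw [← hx.2.2]
  exact Finset.single_le_sum (fun w _ => hx.1 w) (Finset.mem_univ v)

lemma coord_dist_le (x y : EuclideanSpace ℝ V) (v : V) : |x v - y v| ≤ dist x y := by
  have h1 : dist (x v) (y v) ≤ dist x y := by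
    rw [EuclideanSpace.dist_eq]
    have h2 : dist (x v) (y v) = Real.sqrt (dist (x v) (y v) ^ 2) :=
      (Real.sqrt_sq dist_nonneg).symm
    rw [h2]
    apply Real.sqrt_le_sqrt
    exact Finset.single_le_sum (f := fun w => dist (x w) (y w) ^ 2)
      (fun w _ => sq_nonneg _) (Finset.mem_univ v)
  rwa [Real.dist_eq] at h1

lemma sum_sq_le_dist_sq (x y : EuclideanSpace ℝ V) (S : Finset V) :
    ∑ v ∈ S, (x v - y v) ^ 2 ≤ dist x y ^ 2 := by
  rw [EuclideanSpace.dist_eq, Real.sq_sqrt (by positivity)]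
  have h : ∑ w, dist (x w) (y w) ^ 2 = ∑ w, (x w - y w) ^ 2 :=
    Finset.sum_congr rfl fun w _ => by rw [Real.dist_eq, sq_abs]
  rw [h]
  exact Finset.sum_le_sum_of_subset_of_nonneg (Finset.subset_univ S) fun w _ _ => sq_nonneg _

lemma dist_le_sqrt_two {x y : EuclideanSpace ℝ V} {σ τ : Finset V}
    (hx : x ∈ geomFace σ) (hy : y ∈ geomFace τ) : dist x y ≤ Real.sqrt 2 := by
  rw [EuclideanSpace.dist_eq]
  apply Real.sqrt_le_sqrt
  have key : ∀ v, dist (x v) (y v) ^ 2 ≤ x v + y v := by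
    intro v
    rw [Real.dist_eq, sq_abs]
    nlinarith [hx.1 v, hy.1 v, coord_le_one hx v, coord_le_one hy v]
  calc ∑ v, dist (x v) (y v) ^ 2 ≤ ∑ v, (x v + y v) := Finset.sum_le_sum fun v _ => key v
    _ = 2 := by rw [Finset.sum_add_distrib, hx.2.2, hy.2.2]; norm_num

lemma sum_abs_le_sqrt_card_mul_dist (x y : EuclideanSpace ℝ V) (S : Finset V) :
    ∑ v ∈ S, |x v - y v| ≤ Real.sqrt S.card * dist x y := by
  have h1 : (∑ v ∈ S, |x v - y v|) ^ 2 ≤ S.card * ∑ v ∈ S, |x v - y v| ^ 2 :=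
    sq_sum_le_card_mul_sum_sq
  have h2 : ∑ v ∈ S, |x v - y v| ^ 2 ≤ dist x y ^ 2 := by
    refine le_trans (le_of_eq (Finset.sum_congr rfl fun w _ => sq_abs _)) ?_
    exact sum_sq_le_dist_sq x y S
  have h3 : (∑ v ∈ S, |x v - y v|) ^ 2 ≤ (S.card : ℝ) * dist x y ^ 2 := by
    refine le_trans h1 ?_
    have : (0:ℝ) ≤ S.card := by positivity
    nlinarith
  have h0 : (0:ℝ) ≤ ∑ v ∈ S, |x v - y v| := Finset.sum_nonneg fun v _ => abs_nonneg _
  calc ∑ v ∈ S, |x v - y v| = Real.sqrt ((∑ v ∈ S, |x v - y v|) ^ 2) := (Real.sqrt_sq h0).symm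
    _ ≤ Real.sqrt ((S.card : ℝ) * dist x y ^ 2) := Real.sqrt_le_sqrt h3
    _ = Real.sqrt S.card * dist x y := by
        rw [Real.sqrt_mul (by positivity), Real.sqrt_sq dist_nonneg]

lemma segment_mem_geomFace {x y : EuclideanSpace ℝ V} {σ : Finset V}
    (hx : x ∈ geomFace σ) (hy : y ∈ geomFace σ) {t : ℝ} (ht : t ∈ Set.Icc (0:ℝ) 1) :
    x + t • (y - x) ∈ geomFace σ := by
  obtain ⟨ht0, ht1⟩ := ht
  have hcoord : ∀ v, (x + t • (y - x)) v = x v + t * (y v - x v) := by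
    intro v
    simp [PiLp.add_apply, PiLp.smul_apply, PiLp.sub_apply, smul_eq_mul]
  refine ⟨fun v => ?_, fun v hv => ?_, ?_⟩
  · rw [hcoord v]
    nlinarith [hx.1 v, hy.1 v]
  · rw [hcoord v, hx.2.1 v hv, hy.2.1 v hv]; ring
  · calc ∑ v, (x + t • (y - x)) v = ∑ v, (x v + t * (y v - x v)) :=
        Finset.sum_congr rfl fun v _ => hcoord v
      _ = (∑ v, x v) + t * ((∑ v, y v) - (∑ v, x v)) := by
          rw [Finset.sum_add_distrib, ← Finset.mul_sum, Finset.sum_sub_distrib]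
      _ = 1 := by rw [hx.2.2, hy.2.2]; ring

lemma exists_large_coord {x : EuclideanSpace ℝ V} {σ : Finset V} (hx : x ∈ geomFace σ)
    {m : ℕ} (hσ : σ.card ≤ m) : ∃ v, 1 / (m:ℝ) ≤ x v := by
  obtain ⟨v₀, hv₀, _⟩ := exists_pos_coord hx
  obtain ⟨u, hu, hmax⟩ := σ.exists_max_image x ⟨v₀, hv₀⟩
  refine ⟨u, ?_⟩
  have hm : 0 < m := lt_of_lt_of_le (Finset.card_pos.mpr ⟨v₀, hv₀⟩) hσ
  rw [div_le_iff₀ (by positivity)]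
  have h1 : (1:ℝ) = ∑ v ∈ σ, x v := by
    rw [← hx.2.2]
    exact (Finset.sum_subset (Finset.subset_univ σ) fun v _ hv => hx.2.1 v hv).symm
  have h2 : ∑ v ∈ σ, x v ≤ σ.card * x u :=
    le_trans (Finset.sum_le_sum fun v hv => hmax v hv) (by rw [Finset.sum_const, nsmul_eq_mul])
  calc (1:ℝ) ≤ σ.card * x u := h1 ▸ h2
    _ ≤ m * x u := by
        have hxu : 0 ≤ x u := hx.1 u
        have hc : (σ.card : ℝ) ≤ m := by exact_mod_cast hσ
        exact mul_le_mul_of_nonneg_right hc hxu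
    _ = x u * m := mul_comm _ _
  
end Geometry

/-! ### the edge graph -/

def edgeGraph {V : Type} [DecidableEq V] (X : SComplex V) : SimpleGraph V where
  Adj v w := v ≠ w ∧ ({v, w} : Finset V) ∈ X.faces
  symm := ⟨fun v w ⟨h1, h2⟩ => ⟨h1.symm, by rwa [Finset.pair_comm]⟩⟩
  loopless := ⟨fun v h => h.1 rfl⟩

section Graph
variable {V : Type} [Fintype V] [DecidableEq V] {X : SComplex V}

lemma adj_of_mem_face {σ : Finset V} (hσ : σ ∈ X.faces) {v w : V} (hv : v ∈ σ) (hw : w ∈ σ)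
    (hvw : v ≠ w) : (edgeGraph X).Adj v w :=
  ⟨hvw, X.down_closed σ hσ {v, w}
    (Finset.insert_subset hv (Finset.singleton_subset_iff.mpr hw)) ⟨v, by simp⟩⟩

lemma edgeGraph_connected (hc : IsConnected (realization X)) : (edgeGraph X).Connected := by
  have hne : Nonempty V := by
    obtain ⟨x, hx⟩ := hc.nonempty
    obtain ⟨σ, hσ, hxσ⟩ := mem_realization hx
    obtain ⟨v, hv, _⟩ := exists_pos_coord hxσ
    exact ⟨v⟩
  rw [SimpleGraph.connected_iff]
  refine ⟨fun a b => ?_, hne⟩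
  by_contra hab
  have hproj : ∀ v : V, Continuous fun x : EuclideanSpace ℝ V => x v := fun v =>
    (EuclideanSpace.proj (𝕜 := ℝ) v).continuous
  set U : Set (EuclideanSpace ℝ V) :=
    ⋃ v ∈ {v | (edgeGraph X).Reachable a v}, {x : EuclideanSpace ℝ V | 0 < x v} with hU_def
  set U' : Set (EuclideanSpace ℝ V) :=
    ⋃ v ∈ {v | ¬ (edgeGraph X).Reachable a v}, {x : EuclideanSpace ℝ V | 0 < x v} with hU'_def
  have hUopen : IsOpen U := isOpen_biUnion fun v _ => isOpen_lt continuous_const (hproj v)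
  have hU'open : IsOpen U' := isOpen_biUnion fun v _ => isOpen_lt continuous_const (hproj v)
  have hcover : realization X ⊆ U ∪ U' := by
    intro x hx
    obtain ⟨σ, hσ, hxσ⟩ := mem_realization hx
    obtain ⟨v, hv, hpos⟩ := exists_pos_coord hxσ
    by_cases h : (edgeGraph X).Reachable a v
    · exact Or.inl (Set.mem_biUnion h hpos)
    · exact Or.inr (Set.mem_biUnion h hpos)
  have hsingle_pos : ∀ v : V, (0:ℝ) < EuclideanSpace.single v (1:ℝ) v := by
    intro v; rw [EuclideanSpace.single_apply, if_pos rfl]; norm_num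
  have hU : (realization X ∩ U).Nonempty :=
    ⟨EuclideanSpace.single a 1, single_mem_realization X a,
      Set.mem_biUnion (SimpleGraph.Reachable.refl a) (hsingle_pos a)⟩
  have hU' : (realization X ∩ U').Nonempty :=
    ⟨EuclideanSpace.single b 1, single_mem_realization X b,
      Set.mem_biUnion hab (hsingle_pos b)⟩
  obtain ⟨x, hxr, hxU, hxU'⟩ := hc.isPreconnected U U' hUopen hU'open hcover hU hU'
  obtain ⟨σ, hσ, hxσ⟩ := mem_realization hxr
  obtain ⟨v, hv, hvpos⟩ := Set.mem_iUnion₂.mp hxU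
  obtain ⟨w, hw, hwpos⟩ := Set.mem_iUnion₂.mp hxU'
  simp only [Set.mem_setOf_eq] at hvpos hwpos
  have hvσ : v ∈ σ := by
    by_contra h; rw [hxσ.2.1 v h] at hvpos; exact lt_irrefl _ hvpos
  have hwσ : w ∈ σ := by
    by_contra h; rw [hxσ.2.1 w h] at hwpos; exact lt_irrefl _ hwpos
  have hvw : v ≠ w := fun h => hw (h ▸ hv)
  exact hw (hv.trans (SimpleGraph.Adj.reachable (adj_of_mem_face hσ hvσ hwσ hvw)))

lemma abs_graphDist_sub_le (hconn : (edgeGraph X).Connected) {σ : Finset V} (hσ : σ ∈ X.faces)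
    {a v w : V} (hv : v ∈ σ) (hw : w ∈ σ) :
    |((edgeGraph X).dist a v : ℝ) - ((edgeGraph X).dist a w : ℝ)| ≤ 1 := by
  have hdvw : ∀ {v w : V}, v ∈ σ → w ∈ σ → (edgeGraph X).dist v w ≤ 1 := by
    intro v w hv hw
    by_cases hvw : v = w
    · subst hvw; rw [SimpleGraph.dist_self]; omega
    · exact le_of_eq (SimpleGraph.dist_eq_one_iff_adj.mpr (adj_of_mem_face hσ hv hw hvw))
  have h1 : (edgeGraph X).dist a v ≤ (edgeGraph X).dist a w + 1 :=
    le_trans (hconn.dist_triangle (v := w)) (by have := hdvw hw hv; omega)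
  have h2 : (edgeGraph X).dist a w ≤ (edgeGraph X).dist a v + 1 :=
    le_trans (hconn.dist_triangle (v := v)) (by have := hdvw hv hw; omega)
  rw [abs_le]
  constructor
  · have : ((edgeGraph X).dist a w : ℝ) ≤ (edgeGraph X).dist a v + 1 := by exact_mod_cast h2
    linarith
  · have : ((edgeGraph X).dist a v : ℝ) ≤ (edgeGraph X).dist a w + 1 := by exact_mod_cast h1
    linarith

end Graph

/-! ### the potential function and the length lower bound -/

section Lower
variable {V : Type} [Fintype V] [DecidableEq V] {X : SComplex V}

noncomputable def gfun (d : V → ℝ) (x : EuclideanSpace ℝ V) : ℝ := ∑ v, d v * x v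

lemma gfun_single (d : V → ℝ) (v : V) : gfun d (EuclideanSpace.single v (1:ℝ)) = d v := by
  rw [gfun]
  rw [Finset.sum_eq_single v]
  · rw [EuclideanSpace.single_apply, if_pos rfl, mul_one]
  · intro w _ hw
    rw [EuclideanSpace.single_apply, if_neg hw, mul_zero]
  · intro h; exact absurd (Finset.mem_univ v) h

lemma gfun_step {d : V → ℝ} {σ τ : Finset V} {x y : EuclideanSpace ℝ V} {u : V}
    (hx : x ∈ geomFace σ) (hy : y ∈ geomFace τ)
    (hd : ∀ v ∈ σ ∪ τ, |d v - d u| ≤ 1) :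
    |gfun d x - gfun d y| ≤ Real.sqrt ((σ ∪ τ).card) * dist x y := by
  have h0 : ∑ v, (x v - y v) = 0 := by
    rw [Finset.sum_sub_distrib, hx.2.2, hy.2.2]; ring
  have hsum : gfun d x - gfun d y = ∑ v, (d v - d u) * (x v - y v) := by
    have e1 : ∑ v, (d v - d u) * (x v - y v)
        = (∑ v, (d v * x v - d v * y v)) - d u * ∑ v, (x v - y v) := by
      rw [Finset.mul_sum, ← Finset.sum_sub_distrib]
      exact Finset.sum_congr rfl fun v _ => by ring
    rw [e1, h0, mul_zero, sub_zero, gfun, gfun, ← Finset.sum_sub_distrib]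
  have hrestrict : ∑ v, (d v - d u) * (x v - y v) = ∑ v ∈ σ ∪ τ, (d v - d u) * (x v - y v) := by
    symm
    apply Finset.sum_subset (Finset.subset_univ _)
    intro v _ hv
    rw [Finset.mem_union] at hv
    push_neg at hv
    rw [hx.2.1 v hv.1, hy.2.1 v hv.2]
    ring
  rw [hsum, hrestrict]
  calc |∑ v ∈ σ ∪ τ, (d v - d u) * (x v - y v)|
      ≤ ∑ v ∈ σ ∪ τ, |(d v - d u) * (x v - y v)| := Finset.abs_sum_le_sum_abs _ _
    _ ≤ ∑ v ∈ σ ∪ τ, |x v - y v| := by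
        refine Finset.sum_le_sum fun v hv => ?_
        rw [abs_mul]
        have h1 := hd v hv
        have h2 := abs_nonneg (x v - y v)
        nlinarith [abs_nonneg (d v - d u)]
    _ ≤ Real.sqrt ((σ ∪ τ).card) * dist x y := sum_abs_le_sqrt_card_mul_dist x y _

lemma length_lower_bound {k : ℕ} (hconn : (edgeGraph X).Connected) (a b : V)
    (γ : ℝ → EuclideanSpace ℝ V) (hc : ContinuousOn γ (Set.Icc 0 1))
    (h0 : γ 0 = EuclideanSpace.single a 1) (h1 : γ 1 = EuclideanSpace.single b 1)
    (hmap : Set.MapsTo γ (Set.Icc 0 1) (realization (X.skeleton k))) :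
    ENNReal.ofReal ((edgeGraph X).dist a b) ≤
      ENNReal.ofReal (Real.sqrt (2 * (k + 1))) * eVariationOn γ (Set.Icc 0 1) := by
  classical
  set d : V → ℝ := fun v => ((edgeGraph X).dist a v : ℝ) with hd_def
  set g : EuclideanSpace ℝ V → ℝ := gfun d with hg_def
  -- uniform continuity
  have huc := (isCompact_Icc (a := (0:ℝ)) (b := 1)).uniformContinuousOn_of_continuous hc
  rw [Metric.uniformContinuousOn_iff] at huc
  have hε : (0:ℝ) < 1 / (k + 1) := by positivity
  obtain ⟨δ, hδ, hucδ⟩ := huc (1 / (k + 1)) hε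
  obtain ⟨n, hn⟩ := exists_nat_one_div_lt hδ
  set N : ℕ := n + 1 with hN_def
  have hN : 0 < N := Nat.succ_pos n
  have hNδ : (1:ℝ) / N < δ := by exact_mod_cast hn
  set u : ℕ → ℝ := fun i => i / N with hu_def
  have humem : ∀ i ≤ N, u i ∈ Set.Icc (0:ℝ) 1 := by
    intro i hi
    have hiN : (i:ℝ) ≤ N := by exact_mod_cast hi
    have hN' : (0:ℝ) < N := by exact_mod_cast hN
    exact ⟨by positivity, by rw [div_le_one hN']; exact hiN⟩
  have hustep : ∀ i, u (i+1) - u i = 1 / N := by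
    intro i
    have hN' : (0:ℝ) < N := by exact_mod_cast hN
    simp only [u]; rw [← sub_div]; push_cast; ring
  -- each step is small
  have hsmall : ∀ i < N, dist (γ (u i)) (γ (u (i+1))) < 1 / ((k:ℝ)+1) := by
    intro i hi
    have hN' : (0:ℝ) < N := by exact_mod_cast hN
    have hpos : (0:ℝ) < 1 / (N:ℝ) := by positivity
    have hdu : dist (u i) (u (i+1)) < δ := by
      rw [Real.dist_eq, abs_sub_comm, hustep i, abs_of_pos hpos]
      exact hNδ
    exact_mod_cast hucδ _ (humem i (le_of_lt hi)) _ (humem (i+1) hi) hdu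
  -- each step moves g slowly
  have hstep : ∀ i < N, |g (γ (u (i+1))) - g (γ (u i))| ≤
      Real.sqrt (2 * ((k:ℝ) + 1)) * dist (γ (u (i+1))) (γ (u i)) := by
    intro i hi
    have hxi := hmap (humem i (le_of_lt hi))
    have hxi1 := hmap (humem (i+1) hi)
    obtain ⟨σ, hσ, hxσ⟩ := mem_realization hxi
    obtain ⟨τ, hτ, hyτ⟩ := mem_realization hxi1
    obtain ⟨w, hw⟩ := exists_large_coord hxσ (m := k+1) hσ.2
    have hw' : 1 / ((k:ℝ)+1) ≤ γ (u i) w := by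
      convert hw using 2
      push_cast
      ring
    have hε' : (0:ℝ) < 1 / ((k:ℝ)+1) := by positivity
    have hxw : 0 < γ (u i) w := lt_of_lt_of_le hε' hw'
    have hyw : 0 < γ (u (i+1)) w := by
      have h1 := coord_dist_le (γ (u i)) (γ (u (i+1))) w
      have h2 := hsmall i hi
      have h3 : |γ (u i) w - γ (u (i+1)) w| < 1/((k:ℝ)+1) := lt_of_le_of_lt h1 h2
      have h4 := abs_lt.mp h3
      linarith [hw', h4.1, h4.2]
    have hwσ : w ∈ σ := by
      by_contra h; rw [hxσ.2.1 w h] at hxw; exact lt_irrefl _ hxw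
    have hwτ : w ∈ τ := by
      by_contra h; rw [hyτ.2.1 w h] at hyw; exact lt_irrefl _ hyw
    have hd1 : ∀ v ∈ τ ∪ σ, |d v - d w| ≤ 1 := by
      intro v hv
      rcases Finset.mem_union.mp hv with h | h
      · exact abs_graphDist_sub_le hconn hτ.1 h hwτ
      · exact abs_graphDist_sub_le hconn hσ.1 h hwσ
    refine le_trans (gfun_step hyτ hxσ hd1) ?_
    refine mul_le_mul_of_nonneg_right ?_ dist_nonneg
    apply Real.sqrt_le_sqrt
    have hcard : (τ ∪ σ).card ≤ 2 * (k + 1) := by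
      refine le_trans (Finset.card_union_le τ σ) ?_
      have := hτ.2
      have := hσ.2
      omega
    calc ((τ ∪ σ).card : ℝ) ≤ (2 * (k + 1) : ℕ) := by exact_mod_cast hcard
      _ = 2 * ((k:ℝ) + 1) := by push_cast; ring
  -- telescoping
  have hg0 : g (γ 0) = 0 := by
    rw [h0, hg_def, gfun_single]
    simp [d, SimpleGraph.dist_self]
  have hg1 : g (γ 1) = ((edgeGraph X).dist a b : ℝ) := by rw [h1, hg_def, gfun_single]
  have hNne : (N:ℝ) ≠ 0 := Nat.cast_ne_zero.mpr hN.ne'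
  have huN : u N = 1 := by rw [hu_def]; field_simp
  have hu0 : u 0 = 0 := by simp [u]
  set R : ℝ := ∑ i ∈ Finset.range N, dist (γ (u (i+1))) (γ (u i)) with hR_def
  have hDR : ((edgeGraph X).dist a b : ℝ) ≤ Real.sqrt (2*((k:ℝ)+1)) * R := by
    have htel : g (γ (u N)) - g (γ (u 0))
        = ∑ i ∈ Finset.range N, (g (γ (u (i+1))) - g (γ (u i))) :=
      (Finset.sum_range_sub (fun i => g (γ (u i))) N).symm
    calc ((edgeGraph X).dist a b : ℝ) = g (γ (u N)) - g (γ (u 0)) := by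
          rw [huN, hu0, hg1, hg0]; ring
      _ ≤ |∑ i ∈ Finset.range N, (g (γ (u (i+1))) - g (γ (u i)))| := by
          rw [← htel]; exact le_abs_self _
      _ ≤ ∑ i ∈ Finset.range N, |g (γ (u (i+1))) - g (γ (u i))| :=
          Finset.abs_sum_le_sum_abs _ _
      _ ≤ ∑ i ∈ Finset.range N, Real.sqrt (2*((k:ℝ)+1)) * dist (γ (u (i+1))) (γ (u i)) :=
          Finset.sum_le_sum fun i hi => hstep i (Finset.mem_range.mp hi)
      _ = Real.sqrt (2*((k:ℝ)+1)) * R := by rw [hR_def, Finset.mul_sum]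
  have hvar : ENNReal.ofReal R ≤ eVariationOn γ (Set.Icc 0 1) := by
    have hmono : MonotoneOn u (Set.Icc 0 N) := by
      intro i _ j _ hij
      have hN' : (0:ℝ) < N := by exact_mod_cast hN
      have hij' : (i:ℝ) ≤ j := by exact_mod_cast hij
      simp only [u]
      gcongr
    have hkey := eVariationOn.sum_le_of_monotoneOn_Icc (f := γ) (m := 0) (n := N) (u := u) hmono
      (fun i hi => humem i hi.2)
    rw [Nat.Ico_zero_eq_range] at hkey
    calc ENNReal.ofReal R
        = ∑ i ∈ Finset.range N, ENNReal.ofReal (dist (γ (u (i+1))) (γ (u i))) := by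
          rw [hR_def, ENNReal.ofReal_sum_of_nonneg (fun i _ => dist_nonneg)]
      _ = ∑ i ∈ Finset.range N, edist (γ (u (i+1))) (γ (u i)) :=
          Finset.sum_congr rfl fun i _ => (edist_dist _ _).symm
      _ ≤ _ := hkey
  have hgoalcast : (2 * ((k:ℝ) + 1)) = (2 * ((k:ℕ) + 1) : ℕ) := by push_cast; ring
  calc ENNReal.ofReal ((edgeGraph X).dist a b)
      ≤ ENNReal.ofReal (Real.sqrt (2*((k:ℝ)+1)) * R) := ENNReal.ofReal_le_ofReal hDR
    _ = ENNReal.ofReal (Real.sqrt (2*((k:ℝ)+1))) * ENNReal.ofReal R :=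
        ENNReal.ofReal_mul (Real.sqrt_nonneg _)
    _ ≤ ENNReal.ofReal (Real.sqrt (2*((k:ℝ)+1))) * eVariationOn γ (Set.Icc 0 1) :=
        mul_le_mul_right hvar _
    _ = ENNReal.ofReal (Real.sqrt (2*(k+1))) * eVariationOn γ (Set.Icc 0 1) := by
        norm_cast

end Lower

/-! ### upper bounds via edge paths -/

section Upper
variable {V : Type} [Fintype V] [DecidableEq V] {X : SComplex V}

lemma pathDist_single_lower {k : ℕ} (hconn : (edgeGraph X).Connected) (a b : V) :
    ENNReal.ofReal ((edgeGraph X).dist a b) / ENNReal.ofReal (Real.sqrt (2 * (k + 1))) ≤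
      pathDist (realization (X.skeleton k))
        (EuclideanSpace.single a 1) (EuclideanSpace.single b 1) := by
  refine le_iInf fun ⟨γ, hc, h0, h1, hm⟩ => ?_
  have hs : (0:ℝ) < Real.sqrt (2 * (k + 1)) := Real.sqrt_pos.mpr (by positivity)
  rw [ENNReal.div_le_iff_le_mul (Or.inl (by simp [ENNReal.ofReal_eq_zero]; linarith))
    (Or.inl ENNReal.ofReal_ne_top)]
  rw [mul_comm]
  exact length_lower_bound hconn a b γ hc h0 h1 hm

lemma pathDist_single_edge {m : ℕ} (hm : 1 ≤ m) {v w : V} (h : (edgeGraph X).Adj v w) :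
    pathDist (realization (X.skeleton m))
      (EuclideanSpace.single v 1) (EuclideanSpace.single w 1)
      ≤ ENNReal.ofReal (Real.sqrt 2) := by
  have hface : ({v, w} : Finset V) ∈ (X.skeleton m).faces := by
    refine ⟨h.2, ?_⟩
    refine le_trans (Finset.card_insert_le _ _) ?_
    rw [Finset.card_singleton]
    omega
  refine le_trans (pathDist_le_edist_of_segment fun t ht => ?_) ?_
  · exact geomFace_subset_realization hface
      (segment_mem_geomFace (single_mem_geomFace (by simp)) (single_mem_geomFace (by simp)) ht)
  · rw [edist_dist]
    exact ENNReal.ofReal_le_ofReal (dist_le_sqrt_two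
      (single_mem_geomFace (Finset.mem_singleton_self v))
      (single_mem_geomFace (Finset.mem_singleton_self w)))

lemma walk_pathDist_le {m : ℕ} (hm : 1 ≤ m) {v w : V} (p : (edgeGraph X).Walk v w) :
    pathDist (realization (X.skeleton m))
      (EuclideanSpace.single v 1) (EuclideanSpace.single w 1)
      ≤ (p.length : ℝ≥0∞) * ENNReal.ofReal (Real.sqrt 2) := by
  induction p with
  | nil =>
      rw [pathDist_self (single_mem_realization _ _)]
      exact zero_le
  | @cons v v' w h p ih =>
      refine le_trans (pathDist_triangle _ _ (EuclideanSpace.single v' 1) _) ?_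
      rw [SimpleGraph.Walk.length_cons]
      push_cast
      calc pathDist (realization (X.skeleton m)) (EuclideanSpace.single v 1)
            (EuclideanSpace.single v' 1) +
          pathDist (realization (X.skeleton m)) (EuclideanSpace.single v' 1)
            (EuclideanSpace.single w 1)
          ≤ ENNReal.ofReal (Real.sqrt 2) + (p.length : ℝ≥0∞) * ENNReal.ofReal (Real.sqrt 2) :=
            add_le_add (pathDist_single_edge hm h) ih
        _ = ((p.length : ℝ≥0∞) + 1) * ENNReal.ofReal (Real.sqrt 2) := by ring
  
lemma pathDist_point_le {m : ℕ} (hm : 1 ≤ m) (hconn : (edgeGraph X).Connected)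
    {x y : EuclideanSpace ℝ V}
    (hx : x ∈ realization (X.skeleton m)) (hy : y ∈ realization (X.skeleton m)) (D : ℕ)
    (hD : ∀ v w : V, (edgeGraph X).dist v w ≤ D) :
    pathDist (realization (X.skeleton m)) x y
      ≤ ENNReal.ofReal (Real.sqrt 2) * ((D : ℝ≥0∞) + 2) := by
  obtain ⟨σ, hσ, hxσ⟩ := mem_realization hx
  obtain ⟨τ, hτ, hyτ⟩ := mem_realization hy
  obtain ⟨v, hv, -⟩ := exists_pos_coord hxσ
  obtain ⟨w, hw, -⟩ := exists_pos_coord hyτ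
  obtain ⟨p, hp⟩ := (hconn v w).exists_walk_length_eq_dist
  have hseg1 : pathDist (realization (X.skeleton m)) x (EuclideanSpace.single v 1)
      ≤ ENNReal.ofReal (Real.sqrt 2) := by
    refine le_trans (pathDist_le_edist_of_segment fun t ht =>
      geomFace_subset_realization hσ
        (segment_mem_geomFace hxσ (single_mem_geomFace hv) ht)) ?_
    rw [edist_dist]
    exact ENNReal.ofReal_le_ofReal (dist_le_sqrt_two hxσ (single_mem_geomFace hv))
  have hseg2 : pathDist (realization (X.skeleton m)) (EuclideanSpace.single w 1) y
      ≤ ENNReal.ofReal (Real.sqrt 2) := by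
    refine le_trans (pathDist_le_edist_of_segment fun t ht =>
      geomFace_subset_realization hτ
        (segment_mem_geomFace (single_mem_geomFace hw) hyτ ht)) ?_
    rw [edist_dist]
    exact ENNReal.ofReal_le_ofReal (dist_le_sqrt_two (single_mem_geomFace hw) hyτ)
  have hmid : pathDist (realization (X.skeleton m))
      (EuclideanSpace.single v 1) (EuclideanSpace.single w 1)
      ≤ (D : ℝ≥0∞) * ENNReal.ofReal (Real.sqrt 2) := by
    refine le_trans (walk_pathDist_le hm p) ?_
    have : p.length ≤ D := hp ▸ hD v w
    exact mul_le_mul_left (by exact_mod_cast Nat.cast_le.mpr this) _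
  calc pathDist (realization (X.skeleton m)) x y
      ≤ pathDist (realization (X.skeleton m)) x (EuclideanSpace.single v 1) +
          pathDist (realization (X.skeleton m)) (EuclideanSpace.single v 1) y :=
        pathDist_triangle _ _ _ _
    _ ≤ pathDist (realization (X.skeleton m)) x (EuclideanSpace.single v 1) +
          (pathDist (realization (X.skeleton m)) (EuclideanSpace.single v 1)
              (EuclideanSpace.single w 1) +
            pathDist (realization (X.skeleton m)) (EuclideanSpace.single w 1) y) :=
        add_le_add_right (pathDist_triangle _ _ _ _) _
    _ ≤ ENNReal.ofReal (Real.sqrt 2) +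
          ((D : ℝ≥0∞) * ENNReal.ofReal (Real.sqrt 2) + ENNReal.ofReal (Real.sqrt 2)) :=
        add_le_add hseg1 (add_le_add hmid hseg2)
    _ = ENNReal.ofReal (Real.sqrt 2) * ((D : ℝ≥0∞) + 2) := by ring

end Upper

/-- for every `2 ≤ k` there is a constant `C_k` (depending only on `k`)
such that for every finite simplicial complex `X` of dimension `≤ n` (`k ≤ n`) with
connected realization, `diam |X_{k-1}| ≤ C_k · diam |X_k|` in the intrinsic path
metric induced by the standard metric. -/
theorem stmt_2 (k : ℕ) (hk : 2 ≤ k) :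
    ∃ C : ℝ≥0, ∀ n : ℕ, k ≤ n →
      ∀ (V : Type) (_ : Fintype V) (_ : DecidableEq V) (X : SComplex V),
        (∀ σ ∈ X.faces, σ.card ≤ n + 1) →
        IsConnected (realization X) →
        pathDiam (realization (X.skeleton (k - 1))) ≤
          C * pathDiam (realization (X.skeleton k)) := by
  refine ⟨(3 * Real.sqrt 2 * Real.sqrt (2 * (k + 1))).toNNReal, ?_⟩
  intro n hkn V _fin _dec X hdim hconn
  classical
  have hG : (edgeGraph X).Connected := edgeGraph_connected hconn
  have hne : Nonempty V := hG.nonempty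
  set G := edgeGraph X with hG_def
  have hprod : (Finset.univ ×ˢ Finset.univ : Finset (V × V)).Nonempty := by
    rw [Finset.nonempty_product]
    exact ⟨Finset.univ_nonempty, Finset.univ_nonempty⟩
  obtain ⟨pr, hpr, hprmax⟩ :=
    Finset.exists_mem_eq_sup (Finset.univ ×ˢ Finset.univ) hprod
      (fun p : V × V => G.dist p.1 p.2)
  set D : ℕ := (Finset.univ ×ˢ Finset.univ).sup (fun p : V × V => G.dist p.1 p.2) with hD_def
  have hD : ∀ v w : V, G.dist v w ≤ D := fun v w =>
    Finset.le_sup (f := fun p : V × V => G.dist p.1 p.2)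
      (by simp : ((v, w) : V × V) ∈ Finset.univ ×ˢ Finset.univ)
  by_cases hD0 : D = 0
  · -- degenerate case : a single vertex
    have hsub : ∀ v w : V, v = w := by
      intro v w
      have h := hD v w
      rw [hD0, Nat.le_zero] at h
      exact hG.dist_eq_zero_iff.mp h
    have hLHS : pathDiam (realization (X.skeleton (k - 1))) = 0 := by
      refine le_antisymm ?_ zero_le
      rw [pathDiam]
      refine iSup₂_le fun x hx => iSup₂_le fun y hy => ?_
      have hxy : x = y := by
        obtain ⟨σ, _, hxσ⟩ := mem_realization hx
        obtain ⟨τ, _, hyτ⟩ := mem_realization hy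
        ext v
        have huniv : (Finset.univ : Finset V) = {v} :=
          Finset.eq_singleton_iff_unique_mem.mpr ⟨Finset.mem_univ v, fun w _ => hsub w v⟩
        have hx1 : x v = 1 := by
          have h := hxσ.2.2; rwa [huniv, Finset.sum_singleton] at h
        have hy1 : y v = 1 := by
          have h := hyτ.2.2; rwa [huniv, Finset.sum_singleton] at h
        rw [hx1, hy1]
      rw [← hxy, pathDist_self hx]
    rw [hLHS]
    exact zero_le
  · have hD1 : 1 ≤ D := Nat.one_le_iff_ne_zero.mpr hD0
    have hab : G.dist pr.1 pr.2 = D := hprmax.symm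
    have hm1 : 1 ≤ k - 1 := by omega
    set Q := pathDiam (realization (X.skeleton k)) with hQ_def
    have hQ1 : pathDist (realization (X.skeleton k))
        (EuclideanSpace.single pr.1 1) (EuclideanSpace.single pr.2 1) ≤ Q := by
      rw [hQ_def, pathDiam]
      refine le_iSup₂_of_le (EuclideanSpace.single pr.1 1)
        (single_mem_realization _ pr.1) ?_
      exact le_iSup₂_of_le (EuclideanSpace.single pr.2 1)
        (single_mem_realization _ pr.2) le_rfl
    have hsqrt_pos : (0:ℝ) < Real.sqrt (2 * (k + 1)) := Real.sqrt_pos.mpr (by positivity)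
    have hQ2 : (D : ℝ≥0∞) ≤ ENNReal.ofReal (Real.sqrt (2 * (k + 1))) * Q := by
      have h := pathDist_single_lower (k := k) hG pr.1 pr.2
      rw [hab] at h
      have h2 := le_trans h hQ1
      rw [ENNReal.div_le_iff_le_mul
        (Or.inl (by simp [ENNReal.ofReal_eq_zero]; linarith))
        (Or.inl ENNReal.ofReal_ne_top)] at h2
      rw [ENNReal.ofReal_natCast] at h2
      rw [mul_comm]
      exact h2
    have hL : pathDiam (realization (X.skeleton (k - 1)))
        ≤ ENNReal.ofReal (Real.sqrt 2) * ((D : ℝ≥0∞) + 2) := by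
      rw [pathDiam]
      refine iSup₂_le fun x hx => iSup₂_le fun y hy => ?_
      exact pathDist_point_le hm1 hG hx hy D hD
    have hD2 : (D : ℝ≥0∞) + 2 ≤ 3 * (D : ℝ≥0∞) := by
      have h1 : (1 : ℝ≥0∞) ≤ (D : ℝ≥0∞) := by exact_mod_cast hD1
      have h2 : (2 : ℝ≥0∞) ≤ 2 * (D : ℝ≥0∞) := by
        calc (2:ℝ≥0∞) = 2 * 1 := by ring
          _ ≤ 2 * (D : ℝ≥0∞) := by gcongr
      calc (D : ℝ≥0∞) + 2 ≤ (D : ℝ≥0∞) + 2 * (D : ℝ≥0∞) := add_le_add_right h2 _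
        _ = 3 * (D : ℝ≥0∞) := by ring
    have hCoe : ((3 * Real.sqrt 2 * Real.sqrt (2 * (k + 1))).toNNReal : ℝ≥0∞)
        = 3 * ENNReal.ofReal (Real.sqrt 2) * ENNReal.ofReal (Real.sqrt (2 * (k + 1))) := by
      have e0 : ((3 * Real.sqrt 2 * Real.sqrt (2 * (k + 1))).toNNReal : ℝ≥0∞)
          = ENNReal.ofReal (3 * Real.sqrt 2 * Real.sqrt (2 * (k + 1))) := rfl
      rw [e0, ENNReal.ofReal_mul (by positivity), ENNReal.ofReal_mul (by norm_num : (0:ℝ) ≤ 3),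
        ENNReal.ofReal_ofNat]
    calc pathDiam (realization (X.skeleton (k - 1)))
        ≤ ENNReal.ofReal (Real.sqrt 2) * ((D : ℝ≥0∞) + 2) := hL
      _ ≤ ENNReal.ofReal (Real.sqrt 2) * (3 * (D : ℝ≥0∞)) := mul_le_mul_right hD2 _
      _ = 3 * ENNReal.ofReal (Real.sqrt 2) * (D : ℝ≥0∞) := by ring
      _ ≤ 3 * ENNReal.ofReal (Real.sqrt 2) *
            (ENNReal.ofReal (Real.sqrt (2 * (k + 1))) * Q) := mul_le_mul_right hQ2 _
      _ = ((3 * Real.sqrt 2 * Real.sqrt (2 * (k + 1))).toNNReal : ℝ≥0∞) * Q := by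
          rw [hCoe]; ring
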